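/- arXiv:2201.05306 — 5 statements merged into one kernel-verified Lean document; each statement's English description precedes it below -/
import Mathlib

section
/- Let N ≥ 2, 0 < ε < π/2 and 0 < η < ε/2. Then for every λ ∈ Σ_ε and every ξ' = (ξ_1, …, ξ_{N−1}) with each ξ_j ∈ Σ̃_η one has |λ + ξ_1² + ⋯ + ξ_{N−1}²| ≥ (sin((ε − 2η)/2))^{N−1} · (|λ| + |ξ_1|² + ⋯ + |ξ_{N−1}|²). -/
open Complex

/-- The sector `Σ_ε = {λ ∈ ℂ \ {0} : |arg λ| < π − ε}`. -/
def SSector (ε : ℝ) : Set ℂ := {z | z ≠ 0 ∧ |z.arg| < Real.pi - ε}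

/-- The double sector `Σ̃_η = {z ∈ ℂ \ {0} : |arg z| < η or |arg z| > π − η}`. -/
def DSector (η : ℝ) : Set ℂ := {z | z ≠ 0 ∧ (|z.arg| < η ∨ Real.pi - η < |z.arg|)}

/-- Two-vector sector bound. -/
lemma two_vec_bound (δ : ℝ) (hδ0 : 0 < δ) (hδπ : δ ≤ Real.pi) (z w : ℂ)
    (h : |z.arg - w.arg| ≤ Real.pi - δ) :
    Real.sin (δ/2) * (‖z‖ + ‖w‖) ≤ ‖z + w‖ := by
  have hpi := Real.pi_pos
  have hs0 : 0 ≤ Real.sin (δ/2) := Real.sin_nonneg_of_nonneg_of_le_pi (by linarith) (by linarith)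
  have hs1 : Real.sin (δ/2) ≤ 1 := Real.sin_le_one _
  have hcos : Real.cos δ = 1 - 2 * Real.sin (δ/2)^2 := by
    have h1 : Real.cos (2*(δ/2)) = 2*Real.cos (δ/2)^2 - 1 := Real.cos_two_mul _
    have h2 := Real.sin_sq_add_cos_sq (δ/2)
    rw [show 2*(δ/2) = δ by ring] at h1; linarith
  set a := ‖z‖ with ha
  set b := ‖w‖ with hb
  have ha0 : 0 ≤ a := norm_nonneg z
  have hb0 : 0 ≤ b := norm_nonneg w
  have hinner : -(Real.cos δ) * (a*b) ≤ z.re*w.re + z.im*w.im := by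
    have hz1 := Complex.norm_mul_cos_arg z
    have hz2 := Complex.norm_mul_sin_arg z
    have hw1 := Complex.norm_mul_cos_arg w
    have hw2 := Complex.norm_mul_sin_arg w
    have hcsub : Real.cos (Real.pi - δ) ≤ Real.cos (z.arg - w.arg) := by
      rw [← Real.cos_abs (z.arg - w.arg)]
      exact Real.cos_le_cos_of_nonneg_of_le_pi (abs_nonneg _) (by linarith) h
    rw [Real.cos_pi_sub] at hcsub
    have key : z.re*w.re + z.im*w.im = a * b * Real.cos (z.arg - w.arg) := by
      rw [← hz1, ← hz2, ← hw1, ← hw2, Real.cos_sub]; ring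
    rw [key]
    nlinarith [mul_nonneg ha0 hb0]
  have hsq : (Real.sin (δ/2) * (a+b))^2 ≤ ‖z+w‖^2 := by
    have hzz : a^2 = z.re^2 + z.im^2 := by
      rw [ha, Complex.sq_norm, Complex.normSq_apply]; ring
    have hww : b^2 = w.re^2 + w.im^2 := by
      rw [hb, Complex.sq_norm, Complex.normSq_apply]; ring
    have hsum : ‖z+w‖^2 = (z.re+w.re)^2 + (z.im+w.im)^2 := by
      rw [Complex.sq_norm, Complex.normSq_apply, Complex.add_re, Complex.add_im]; ring
    rw [hsum]
    have hkey : 0 ≤ (1 - Real.sin (δ/2)^2) * (a - b)^2 :=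
      mul_nonneg (by nlinarith) (sq_nonneg _)
    nlinarith [hinner, hzz, hww, hkey]
  have h1 : 0 ≤ Real.sin (δ/2) * (a+b) := mul_nonneg hs0 (by linarith)
  exact (pow_le_pow_iff_left₀ h1 (norm_nonneg _) two_ne_zero).mp hsq

/-- In a narrow sector around the positive axis: positive real part and slope bound. -/
lemma narrow_sector_re_im (η : ℝ) (hη0 : 0 < η) (hη2 : η < Real.pi/2) (ζ : ℂ)
    (hζ0 : ζ ≠ 0) (ha : |ζ.arg| < η) :
    0 < ζ.re ∧ Real.cos η * |ζ.im| ≤ Real.sin η * ζ.re := by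
  have hpi := Real.pi_pos
  have habs : 0 < ‖ζ‖ := norm_pos_iff.mpr hζ0
  have hre := Complex.norm_mul_cos_arg ζ
  have him := Complex.norm_mul_sin_arg ζ
  have harg2 : |ζ.arg| < Real.pi/2 := lt_trans ha hη2
  have hcosa : 0 < Real.cos ζ.arg := Real.cos_pos_of_mem_Ioo (abs_lt.mp harg2 |>.imp (fun h => h) id |> fun _ => ⟨by linarith [(abs_lt.mp harg2).1], (abs_lt.mp harg2).2⟩)
  have hre0 : 0 < ζ.re := by rw [← hre]; positivity
  refine ⟨hre0, ?_⟩
  -- |sin (arg)| = sin |arg|, cos arg = cos |arg|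
  have hsinabs : |Real.sin ζ.arg| = Real.sin |ζ.arg| := by
    rcases abs_cases ζ.arg with ⟨h1, h2⟩ | ⟨h1, h2⟩
    · rw [h1, _root_.abs_of_nonneg (Real.sin_nonneg_of_nonneg_of_le_pi h2 (by linarith [(abs_lt.mp harg2).2]))]
    · rw [h1, Real.sin_neg, abs_of_nonpos]
      exact Real.sin_nonpos_of_nonpos_of_neg_pi_le (le_of_lt h2) (by linarith [(abs_lt.mp harg2).1])
  have hcosabs : Real.cos |ζ.arg| = Real.cos ζ.arg := Real.cos_abs _
  -- sin(|arg| - η) ≤ 0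
  have hkey : Real.sin |ζ.arg| * Real.cos η - Real.cos |ζ.arg| * Real.sin η ≤ 0 := by
    rw [← Real.sin_sub]
    apply Real.sin_nonpos_of_nonpos_of_neg_pi_le (by linarith) (by linarith [abs_nonneg ζ.arg])
  have him' : |ζ.im| = ‖ζ‖ * |Real.sin ζ.arg| := by
    rw [← him, abs_mul, abs_of_pos habs]
  rw [him', hsinabs, ← hre, ← hcosabs]
  nlinarith [habs]

/-- A double-sector element has a representative (itself or its negation) in the narrow sector. -/
lemma dsector_rep (η : ℝ) (hη0 : 0 < η) (hη2 : η < Real.pi/2) (ξ : ℂ) (hξ : ξ ∈ DSector η) :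
    ∃ ζ : ℂ, ζ ≠ 0 ∧ |ζ.arg| < η ∧ ζ^2 = ξ^2 ∧ ‖ζ‖ = ‖ξ‖ := by
  have hpi := Real.pi_pos
  obtain ⟨hne, hcase⟩ := hξ
  rcases hcase with h | h
  · exact ⟨ξ, hne, h, rfl, rfl⟩
  · refine ⟨-ξ, neg_ne_zero.mpr hne, ?_, by ring, norm_neg ξ⟩
    have hbound := Complex.abs_arg_le_pi ξ
    rcases lt_trichotomy ξ.im 0 with him | him | him
    · rw [Complex.arg_neg_eq_arg_add_pi_of_im_neg him]
      have harg_neg : ξ.arg < 0 := Complex.arg_neg_iff.mpr him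
      have h1 : Real.pi - η < -ξ.arg := by rwa [abs_of_neg harg_neg] at h
      have h2 : -Real.pi < ξ.arg := Complex.neg_pi_lt_arg ξ
      rw [abs_lt]; constructor <;> linarith
    · -- real case: arg is 0 or π; |arg| > π - η forces arg = π
      have hre : ξ.re < 0 := by
        rcases lt_trichotomy ξ.re 0 with hr | hr | hr
        · exact hr
        · exact absurd (by simp [Complex.ext_iff, hr, him] : ξ = 0) hne
        · have : ξ.arg = 0 := Complex.arg_eq_zero_iff.mpr ⟨le_of_lt hr, him⟩
          rw [this] at h; simp at h; linarith
      have : (-ξ).arg = 0 := Complex.arg_eq_zero_iff.mpr ⟨by simp; linarith, by simp [him]⟩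
      rw [this]; simpa using hη0
    · rw [Complex.arg_neg_eq_arg_sub_pi_of_im_pos him]
      have harg_nonneg : 0 ≤ ξ.arg := Complex.arg_nonneg_iff.mpr (le_of_lt him)
      have h1 : Real.pi - η < ξ.arg := by rwa [_root_.abs_of_nonneg harg_nonneg] at h
      have h2 : ξ.arg ≤ Real.pi := Complex.arg_le_pi ξ
      rw [abs_lt]; constructor <;> linarith

/-- Converse slope bound: small slope implies small argument. -/
lemma arg_le_of_slope (θ : ℝ) (hθ0 : 0 < θ) (hθ2 : θ < Real.pi/2) (z : ℂ) (hre : 0 < z.re)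
    (h : Real.cos θ * |z.im| ≤ Real.sin θ * z.re) : |z.arg| ≤ θ := by
  have hpi := Real.pi_pos
  have hz0 : z ≠ 0 := fun hz => by simp [hz] at hre
  have habs : 0 < ‖z‖ := norm_pos_iff.mpr hz0
  have harg2 : |z.arg| < Real.pi/2 :=
    Complex.abs_arg_lt_pi_div_two_iff.mpr (Or.inl hre)
  by_contra hcon
  push_neg at hcon
  -- then tan-type comparison fails: sin|arg| cos θ > cos|arg| sin θ
  have hre' := Complex.norm_mul_cos_arg z
  have him' := Complex.norm_mul_sin_arg z
  have hsinabs : |Real.sin z.arg| = Real.sin |z.arg| := by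
    rcases abs_cases z.arg with ⟨h1, h2⟩ | ⟨h1, h2⟩
    · rw [h1, _root_.abs_of_nonneg (Real.sin_nonneg_of_nonneg_of_le_pi h2 (by linarith [(abs_lt.mp harg2).2]))]
    · rw [h1, Real.sin_neg, abs_of_nonpos]
      exact Real.sin_nonpos_of_nonpos_of_neg_pi_le (le_of_lt h2) (by linarith [(abs_lt.mp harg2).1])
  have hkey : 0 < Real.sin (|z.arg| - θ) :=
    Real.sin_pos_of_pos_of_lt_pi (by linarith) (by linarith [(abs_lt.mp harg2).2])
  rw [Real.sin_sub] at hkey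
  have him2 : |z.im| = ‖z‖ * Real.sin |z.arg| := by
    rw [← him', abs_mul, abs_of_pos habs, hsinabs]
  have hre2 : z.re = ‖z‖ * Real.cos |z.arg| := by
    rw [← hre', Real.cos_abs]
  rw [him2, hre2] at h
  nlinarith [habs]

/-- Bounds for the square of a double-sector element. -/
lemma dsector_sq_bounds (η : ℝ) (hη0 : 0 < η) (hη4 : η < Real.pi/4) (ξ : ℂ)
    (hξ : ξ ∈ DSector η) :
    Real.cos (2*η) * ‖ξ‖ ^ 2 ≤ (ξ^2).re ∧
      Real.cos (2*η) * |(ξ^2).im| ≤ Real.sin (2*η) * (ξ^2).re := by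
  have hpi := Real.pi_pos
  have hη2 : η < Real.pi/2 := by linarith
  obtain ⟨ζ, hζ0, harg, hsq, habs⟩ := dsector_rep η hη0 hη2 ξ hξ
  obtain ⟨hre, hslope⟩ := narrow_sector_re_im η hη0 hη2 ζ hζ0 harg
  rw [← hsq, ← habs]
  set c := Real.cos η with hc
  set s := Real.sin η with hs
  have hcpos : 0 < c := Real.cos_pos_of_mem_Ioo ⟨by linarith, hη2⟩
  have hspos : 0 < s := Real.sin_pos_of_pos_of_lt_pi hη0 (by linarith)
  have hpyth : s^2 + c^2 = 1 := Real.sin_sq_add_cos_sq η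
  have hcos2 : Real.cos (2*η) = c^2 - s^2 := by
    rw [Real.cos_two_mul]; nlinarith
  have hsin2 : Real.sin (2*η) = 2 * s * c := Real.sin_two_mul η
  have hre2 : (ζ^2).re = ζ.re^2 - ζ.im^2 := by
    simp [pow_two, Complex.mul_re]
  have him2 : (ζ^2).im = 2 * ζ.re * ζ.im := by
    simp [pow_two, Complex.mul_im]; ring
  have habs2 : ‖ζ‖ ^ 2 = ζ.re^2 + ζ.im^2 := by
    rw [Complex.sq_norm, Complex.normSq_apply]; ring
  have himabs : |ζ.im|^2 = ζ.im^2 := sq_abs _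
  have hsl2 : c^2 * ζ.im^2 ≤ s^2 * ζ.re^2 := by
    have := mul_self_le_mul_self (by positivity : (0:ℝ) ≤ c * |ζ.im|) hslope
    nlinarith [_root_.sq_abs ζ.im]
  constructor
  · rw [hcos2, hre2, habs2]
    nlinarith
  · rw [hcos2, hsin2, hre2, him2]
    have habsim : |2 * ζ.re * ζ.im| = 2 * ζ.re * |ζ.im| := by
      rw [abs_mul, abs_mul]
      rw [_root_.abs_of_nonneg (by norm_num : (0:ℝ) ≤ 2), _root_.abs_of_pos hre]
    rw [habsim, ← himabs]
    have hfact : 0 ≤ (s * ζ.re - c * |ζ.im|) * (c * ζ.re + s * |ζ.im|) :=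
      mul_nonneg (by linarith) (by positivity)
    nlinarith [hfact]

/-- For `λ ∈ Σ_ε` and `ξ_j ∈ Σ̃_η` (`j = 1, …, N−1`) with `0 < η < ε/2`,
`|λ + ξ_1² + ⋯ + ξ_{N−1}²| ≥ (sin((ε − 2η)/2))^{N−1} (|λ| + |ξ_1|² + ⋯ + |ξ_{N−1}|²)`. -/
theorem sector_lower_bound_sum
    (N : ℕ) (hN : 2 ≤ N)
    (ε η : ℝ) (hε : 0 < ε) (hε' : ε < Real.pi / 2) (hη : 0 < η) (hη' : η < ε / 2)
    (lam : ℂ) (hlam : lam ∈ SSector ε)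
    (ξ : Fin (N - 1) → ℂ) (hξ : ∀ j, ξ j ∈ DSector η) :
    Real.sin ((ε - 2 * η) / 2) ^ (N - 1)
        * (‖lam‖ + ∑ j, ‖ξ j‖ ^ 2)
      ≤ ‖lam + ∑ j, ξ j ^ 2‖ := by
  have hpi := Real.pi_pos
  have hη4 : η < Real.pi/4 := by linarith
  have hδ0 : 0 < ε - 2*η := by linarith
  have hδπ : ε - 2*η ≤ Real.pi := by linarith
  set s := Real.sin ((ε - 2 * η) / 2) with hsdef
  have hs0 : 0 < s := Real.sin_pos_of_pos_of_lt_pi (by linarith) (by linarith)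
  have hs1 : s ≤ 1 := Real.sin_le_one _
  have hc2pos : 0 < Real.cos (2*η) := Real.cos_pos_of_mem_Ioo ⟨by linarith, by linarith⟩
  set S := ∑ j, ξ j ^ 2 with hSdef
  set T := ∑ j, ‖ξ j‖ ^ 2 with hTdef
  have hne : Nonempty (Fin (N-1)) := ⟨⟨0, by omega⟩⟩
  have hTpos : 0 < T :=
    Finset.sum_pos (fun j _ => pow_pos (norm_pos_iff.mpr (hξ j).1) 2) Finset.univ_nonempty
  -- real part bound
  have hSre : Real.cos (2*η) * T ≤ S.re := by
    rw [hSdef, Complex.re_sum, hTdef, Finset.mul_sum]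
    exact Finset.sum_le_sum fun j _ => (dsector_sq_bounds η hη hη4 (ξ j) (hξ j)).1
  have hSrepos : 0 < S.re := lt_of_lt_of_le (by positivity) hSre
  -- imaginary part bound
  have hSim : Real.cos (2*η) * |S.im| ≤ Real.sin (2*η) * S.re := by
    have h1 : |S.im| ≤ ∑ j, |(ξ j ^ 2).im| := by
      rw [hSdef, Complex.im_sum]
      exact Finset.abs_sum_le_sum_abs _ _
    calc Real.cos (2*η) * |S.im| ≤ Real.cos (2*η) * ∑ j, |(ξ j ^ 2).im| :=
          mul_le_mul_of_nonneg_left h1 hc2pos.le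
      _ = ∑ j, Real.cos (2*η) * |(ξ j ^ 2).im| := Finset.mul_sum _ _ _
      _ ≤ ∑ j, Real.sin (2*η) * (ξ j ^ 2).re :=
          Finset.sum_le_sum fun j _ => (dsector_sq_bounds η hη hη4 (ξ j) (hξ j)).2
      _ = Real.sin (2*η) * S.re := by rw [hSdef, Complex.re_sum, Finset.mul_sum]
  have hargS : |S.arg| ≤ 2*η := arg_le_of_slope (2*η) (by linarith) (by linarith) S hSrepos hSim
  obtain ⟨hlam0, hlamarg⟩ := hlam
  have hargdiff : |lam.arg - S.arg| ≤ Real.pi - (ε - 2*η) := by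
    calc |lam.arg - S.arg| ≤ |lam.arg| + |S.arg| := abs_sub lam.arg S.arg
      _ ≤ (Real.pi - ε) + 2*η := add_le_add hlamarg.le hargS
      _ = Real.pi - (ε - 2*η) := by ring
  have h2v := two_vec_bound (ε - 2*η) hδ0 hδπ lam S hargdiff
  rw [show (ε - 2*η)/2 = (ε - 2*η)/2 by rfl] at h2v
  -- |S| ≥ s^(N-2) * T
  have hcs : s ≤ Real.cos (2*η) := by
    rw [← Real.sin_pi_div_two_sub (2*η), hsdef]
    apply Real.strictMonoOn_sin.monotoneOn ⟨by linarith, by linarith⟩ ⟨by linarith, by linarith⟩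
    linarith
  have hSabs : S.re ≤ ‖S‖ := Complex.re_le_norm S
  obtain ⟨M, rfl⟩ : ∃ M, N = M + 2 := ⟨N - 2, by omega⟩
  have hexp : M + 2 - 1 = M + 1 := rfl
  rw [hexp]
  have hS_ge : s ^ M * T ≤ ‖S‖ := by
    rcases Nat.eq_zero_or_pos M with hM | hM
    · subst hM
      have : S = ξ ⟨0, by omega⟩ ^ 2 ∧ T = ‖ξ ⟨0, by omega⟩‖ ^ 2 := by
        rw [hSdef, hTdef]
        constructor <;> · rw [show ((0:ℕ)+2-1 : ℕ) = 1 from rfl] at *; simp [Fin.sum_univ_one]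
      rw [this.1, this.2, pow_zero, one_mul, norm_pow]
    · have h1 : s ^ M ≤ s := by
        calc s ^ M ≤ s ^ 1 := pow_le_pow_of_le_one hs0.le hs1 hM
          _ = s := pow_one s
      calc s ^ M * T ≤ Real.cos (2*η) * T :=
            mul_le_mul_of_nonneg_right (h1.trans hcs) hTpos.le
        _ ≤ S.re := hSre
        _ ≤ ‖S‖ := hSabs
  have hpow : s ^ (M+1) ≤ s := by
    calc s ^ (M+1) ≤ s ^ 1 := pow_le_pow_of_le_one hs0.le hs1 (by omega)
      _ = s := pow_one s
  calc s ^ (M+1) * (‖lam‖ + T)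
      = s ^ (M+1) * ‖lam‖ + s * (s ^ M * T) := by ring
    _ ≤ s * ‖lam‖ + s * ‖S‖ :=
        add_le_add (mul_le_mul_of_nonneg_right hpow (norm_nonneg _))
          (mul_le_mul_of_nonneg_left hS_ge hs0.le)
    _ = s * (‖lam‖ + ‖S‖) := by ring
    _ ≤ ‖lam + S‖ := h2v
end

section
/- Let N ≥ 2 and 0 < η < π/4. Then there exists a constant c > 0, depending only on N and η, such that for every ξ' = (ξ_1, …, ξ_{N−1}) with each ξ_j ∈ Σ̃_η one has c·Ã ≤ Re A ≤ |A| ≤ Ã, where A := (ξ_1² + ⋯ + ξ_{N−1}²)^{1/2} and Ã := (|ξ_1|² + ⋯ + |ξ_{N−1}|²)^{1/2}. -/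
open Complex

noncomputable section

/-- `A = (ξ_1² + ⋯ + ξ_{N−1}²)^{1/2}` (principal square root). -/
def AA {n : ℕ} (ξ : Fin n → ℂ) : ℂ := (∑ j, ξ j ^ 2) ^ ((1 : ℂ) / 2)

/-- `B = (λ + A²)^{1/2}` (principal square root). -/
def BB {n : ℕ} (lam : ℂ) (ξ : Fin n → ℂ) : ℂ := (lam + AA ξ ^ 2) ^ ((1 : ℂ) / 2)

/-- `Ã = (|ξ_1|² + ⋯ + |ξ_{N−1}|²)^{1/2}`. -/
def tA {n : ℕ} (ξ : Fin n → ℂ) : ℝ := Real.sqrt (∑ j, ‖ξ j‖ ^ 2)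

/-- `M_λ(ξ', x_N) = (e^{−B x_N} − e^{−A x_N})/(B − A)`. -/
def Mfun {n : ℕ} (lam : ℂ) (ξ : Fin n → ℂ) (x : ℝ) : ℂ :=
  (Complex.exp (-BB lam ξ * (x : ℂ)) - Complex.exp (-AA ξ * (x : ℂ))) / (BB lam ξ - AA ξ)

/-- In the double sector, `cos η · |z| ≤ |Re z|`. -/
lemma DSector.cos_abs_le {η : ℝ} (hη : 0 < η) (hη' : η < Real.pi / 4) {z : ℂ}
    (hz : z ∈ DSector η) : Real.cos η * ‖z‖ ≤ |z.re| := by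
  obtain ⟨hz0, harg⟩ := hz
  have ha : 0 < ‖z‖ := norm_pos_iff.mpr hz0
  have hcos : Real.cos z.arg = z.re / ‖z‖ := Complex.cos_arg hz0
  have hπ : (0:ℝ) < Real.pi := Real.pi_pos
  rcases harg with h | h
  · have h1 : Real.cos η ≤ Real.cos |z.arg| :=
      Real.cos_le_cos_of_nonneg_of_le_pi (abs_nonneg _) (by linarith) h.le
    rw [Real.cos_abs, hcos] at h1
    have : Real.cos η * ‖z‖ ≤ z.re := by
      have := mul_le_mul_of_nonneg_right h1 ha.le
      rwa [div_mul_cancel₀ _ ha.ne'] at this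
    exact this.trans (le_abs_self _)
  · have h1 : Real.cos |z.arg| ≤ Real.cos (Real.pi - η) :=
      Real.cos_le_cos_of_nonneg_of_le_pi (by linarith) (Complex.abs_arg_le_pi z) h.le
    rw [Real.cos_abs, Real.cos_pi_sub, hcos] at h1
    have : z.re ≤ -(Real.cos η * ‖z‖) := by
      have := mul_le_mul_of_nonneg_right h1 ha.le
      rwa [div_mul_cancel₀ _ ha.ne', neg_mul] at this
    calc Real.cos η * ‖z‖ ≤ -z.re := by linarith
    _ ≤ |z.re| := neg_le_abs _

/-- In the double sector, `Re (z²) ≥ (2 cos²η − 1)·|z|²`. -/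
lemma DSector.re_sq {η : ℝ} (hη : 0 < η) (hη' : η < Real.pi / 4) {z : ℂ}
    (hz : z ∈ DSector η) :
    (2 * Real.cos η ^ 2 - 1) * ‖z‖ ^ 2 ≤ (z ^ 2).re := by
  have h1 := DSector.cos_abs_le hη hη' hz
  have hcη : 0 ≤ Real.cos η := by
    apply Real.cos_nonneg_of_mem_Icc
    constructor <;> nlinarith [Real.pi_pos]
  have hnn : 0 ≤ Real.cos η * ‖z‖ := mul_nonneg hcη (norm_nonneg z)
  have hsq : (Real.cos η * ‖z‖) ^ 2 ≤ z.re ^ 2 := by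
    have := mul_le_mul h1 h1 hnn (abs_nonneg _)
    nlinarith [_root_.sq_abs z.re]
  have hre : (z ^ 2).re = z.re * z.re - z.im * z.im := by
    rw [sq, Complex.mul_re]
  have habs : z.re ^ 2 + z.im ^ 2 = ‖z‖ ^ 2 := by
    rw [Complex.sq_norm, Complex.normSq_apply]; ring
  nlinarith

/-- Lemma (a): `c Ã ≤ Re A ≤ |A| ≤ Ã` on the double sector. -/
theorem A_bounds
    (N : ℕ) (hN : 2 ≤ N) (η : ℝ) (hη : 0 < η) (hη' : η < Real.pi / 4) :
    ∃ c : ℝ, 0 < c ∧ ∀ ξ : Fin (N - 1) → ℂ, (∀ j, ξ j ∈ DSector η) →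
      c * tA ξ ≤ (AA ξ).re ∧ (AA ξ).re ≤ ‖AA ξ‖ ∧
        ‖AA ξ‖ ≤ tA ξ := by
  set k : ℝ := 2 * Real.cos η ^ 2 - 1 with hkdef
  have hπ : (0:ℝ) < Real.pi := Real.pi_pos
  have hk : 0 < k := by
    have h4 : Real.cos (Real.pi / 4) < Real.cos η := by
      exact Real.cos_lt_cos_of_nonneg_of_le_pi_div_two hη.le (by linarith) hη'
    rw [Real.cos_pi_div_four] at h4
    have h2 : (0:ℝ) < Real.sqrt 2 / 2 := by positivity
    nlinarith [Real.sq_sqrt (by norm_num : (2:ℝ) ≥ 0)]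
  refine ⟨Real.sqrt (k / 2), Real.sqrt_pos.mpr (by linarith), ?_⟩
  intro ξ hξ
  -- notation
  set S : ℂ := ∑ j, ξ j ^ 2 with hSdef
  set T : ℝ := ∑ j, ‖ξ j‖ ^ 2 with hTdef
  have hTnn : 0 ≤ T := Finset.sum_nonneg fun j _ => sq_nonneg _
  have htA : tA ξ = Real.sqrt T := rfl
  have htAnn : 0 ≤ tA ξ := Real.sqrt_nonneg _
  have htAsq : tA ξ ^ 2 = T := Real.sq_sqrt hTnn
  -- T > 0
  have hne : Nonempty (Fin (N - 1)) := ⟨⟨0, by omega⟩⟩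
  obtain ⟨j0⟩ := hne
  have hTpos : 0 < T := by
    have h0 : 0 < ‖ξ j0‖ ^ 2 := pow_pos (norm_pos_iff.mpr (hξ j0).1) 2
    exact lt_of_lt_of_le h0 (Finset.single_le_sum
      (f := fun j => ‖ξ j‖ ^ 2) (fun j _ => sq_nonneg _) (Finset.mem_univ j0))
  -- Re S ≥ k T
  have hReS : k * T ≤ S.re := by
    rw [hSdef, Complex.re_sum, hTdef, Finset.mul_sum]
    exact Finset.sum_le_sum fun j _ => DSector.re_sq hη hη' (hξ j)
  -- |S| ≤ T
  have habsS : ‖S‖ ≤ T := by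
    rw [hSdef, hTdef]
    refine (norm_sum_le _ _).trans (le_of_eq ?_)
    exact Finset.sum_congr rfl fun j _ => by rw [norm_pow]
  have hSne : S ≠ 0 := by
    intro h
    rw [h] at hReS
    simp at hReS
    nlinarith
  -- A facts
  have hAA : AA ξ = S ^ ((1:ℂ)/2) := rfl
  have hA2 : AA ξ * AA ξ = S := by
    rw [hAA, ← Complex.cpow_add _ _ hSne]; norm_num
  -- Re A ≥ 0
  have hReA : 0 ≤ (AA ξ).re := by
    rw [hAA, Complex.cpow_def_of_ne_zero hSne, Complex.exp_re]
    apply mul_nonneg (Real.exp_nonneg _)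
    apply Real.cos_nonneg_of_mem_Icc
    have h1 := Complex.neg_pi_lt_arg S
    have h2 := Complex.arg_le_pi S
    constructor
    · simp [Complex.log_im]
      nlinarith [Complex.neg_pi_lt_arg S]
    · simp [Complex.log_im]
      nlinarith [Complex.arg_le_pi S]
  -- relations
  have hSre : S.re = (AA ξ).re * (AA ξ).re - (AA ξ).im * (AA ξ).im := by
    conv_lhs => rw [← hA2]
    rw [Complex.mul_re]
  have hSabs : ‖S‖ = (AA ξ).re ^ 2 + (AA ξ).im ^ 2 := by
    conv_lhs => rw [← hA2]
    rw [norm_mul, ← sq, Complex.sq_norm, Complex.normSq_apply]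
    ring
  -- |A| ≤ tA
  have habsA : ‖AA ξ‖ ≤ tA ξ := by
    have h : ‖AA ξ‖ ^ 2 ≤ tA ξ ^ 2 := by
      rw [htAsq]
      calc ‖AA ξ‖ ^ 2 = ‖S‖ := by
            rw [← hA2, norm_mul, sq]
      _ ≤ T := habsS
    have := Real.sqrt_le_sqrt h
    rwa [Real.sqrt_sq (norm_nonneg _), Real.sqrt_sq htAnn] at this
  refine ⟨?_, Complex.re_le_norm _, habsA⟩
  -- c * tA ≤ Re A
  have hsq : (Real.sqrt (k / 2) * tA ξ) ^ 2 ≤ (AA ξ).re ^ 2 := by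
    rw [mul_pow, Real.sq_sqrt (by linarith : (0:ℝ) ≤ k / 2), htAsq]
    have hle : S.re ≤ ‖S‖ := Complex.re_le_norm S
    nlinarith
  have := Real.sqrt_le_sqrt hsq
  rwa [Real.sqrt_sq (mul_nonneg (Real.sqrt_nonneg _) htAnn), Real.sqrt_sq hReA] at this

end
end

section
/- Let N ≥ 2, 0 < ε < π/2 and 0 < η < min{π/4, ε/2}. Then there exists a constant c > 0, depending only on N, ε and η, such that for every λ ∈ Σ_ε and every ξ' = (ξ_1, …, ξ_{N−1}) with each ξ_j ∈ Σ̃_η one has c·(|λ|^{1/2} + Ã) ≤ Re B ≤ |B| ≤ |λ|^{1/2} + Ã, where A := (ξ_1² + ⋯ + ξ_{N−1}²)^{1/2}, B := (λ + A²)^{1/2} and Ã := (|ξ_1|² + ⋯ + |ξ_{N−1}|²)^{1/2}. -/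
open Complex

noncomputable section

/-- The principal square root squares to the original number. -/
lemma cpow_half_sq {w : ℂ} (hw : w ≠ 0) : (w ^ ((1:ℂ)/2)) ^ 2 = w := by
  rw [sq, ← Complex.cpow_add _ _ hw]
  norm_num

/-- The principal square root has nonnegative real part. -/
lemma cpow_half_re_nonneg (w : ℂ) : 0 ≤ (w ^ ((1:ℂ)/2)).re := by
  by_cases hw : w = 0
  · simp [hw, Complex.zero_cpow (by norm_num : (1:ℂ)/2 ≠ 0)]
  · rw [Complex.cpow_def_of_ne_zero hw, Complex.exp_re]
    apply mul_nonneg (Real.exp_nonneg _)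
    have h1 : (Complex.log w * ((1:ℂ)/2)).im = w.arg / 2 := by
      simp [Complex.mul_im, Complex.log_im]
      ring
    rw [h1]
    apply Real.cos_nonneg_of_mem_Icc
    constructor
    · have := Complex.neg_pi_lt_arg w
      linarith
    · have := Complex.arg_le_pi w
      have := Real.pi_pos
      linarith

/-- Formula for the real part of the principal square root. -/
lemma cpow_half_re {w : ℂ} (hw : w ≠ 0) :
    (w ^ ((1:ℂ)/2)).re = Real.sqrt ((‖w‖ + w.re) / 2) := by
  set B := w ^ ((1:ℂ)/2) with hB
  have h2 : B ^ 2 = w := cpow_half_sq hw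
  have habs : ‖w‖ = B.re ^ 2 + B.im ^ 2 := by
    rw [← h2, norm_pow, Complex.sq_norm, Complex.normSq_apply]
    ring
  have hre : w.re = B.re ^ 2 - B.im ^ 2 := by
    rw [← h2]
    simp [sq, Complex.mul_re]
  have h3 : (‖w‖ + w.re) / 2 = B.re ^ 2 := by rw [habs, hre]; ring
  rw [h3, Real.sqrt_sq (cpow_half_re_nonneg w)]

/-- Formula for the absolute value of the principal square root. -/
lemma cpow_half_abs {w : ℂ} (hw : w ≠ 0) :
    ‖w ^ ((1:ℂ)/2)‖ = Real.sqrt (‖w‖) := by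
  have h2 : (w ^ ((1:ℂ)/2)) ^ 2 = w := cpow_half_sq hw
  have h3 : ‖w ^ ((1:ℂ)/2)‖ ^ 2 = ‖w‖ := by
    rw [← norm_pow, h2]
  rw [← h3, Real.sqrt_sq (norm_nonneg _)]

lemma sqrt_add_le (x y : ℝ) (hx : 0 ≤ x) (hy : 0 ≤ y) :
    Real.sqrt (x + y) ≤ Real.sqrt x + Real.sqrt y := by
  have h : Real.sqrt (x + y) ≤ Real.sqrt ((Real.sqrt x + Real.sqrt y) ^ 2) := by
    apply Real.sqrt_le_sqrt
    nlinarith [Real.sq_sqrt hx, Real.sq_sqrt hy, Real.sqrt_nonneg x, Real.sqrt_nonneg y]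
  rwa [Real.sqrt_sq (by positivity)] at h

/-- Key per-coordinate estimate on the double sector. -/
lemma dsector_sq_re {η : ℝ} (hη : 0 < η) (hη2 : η < Real.pi / 4) {z : ℂ}
    (hz : z ≠ 0) (harg : |z.arg| < η ∨ Real.pi - η < |z.arg|) :
    Real.cos (2*η) * ‖z‖ ^ 2 ≤ (z ^ 2).re := by
  have hπ := Real.pi_pos
  have hηπ : η ≤ Real.pi := by linarith
  have hη0 : 0 ≤ Real.cos η := by
    apply Real.cos_nonneg_of_mem_Icc; constructor <;> linarith
  have hcossq : Real.cos η ^ 2 ≤ Real.cos z.arg ^ 2 := by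
    rcases harg with h | h
    · have h1 : Real.cos η ≤ Real.cos |z.arg| :=
        Real.cos_le_cos_of_nonneg_of_le_pi (abs_nonneg _) hηπ h.le
      rw [Real.cos_abs] at h1
      nlinarith
    · have h1 : Real.cos |z.arg| ≤ Real.cos (Real.pi - η) :=
        Real.cos_le_cos_of_nonneg_of_le_pi (by linarith) (Complex.abs_arg_le_pi z) h.le
      rw [Real.cos_abs, Real.cos_pi_sub] at h1
      nlinarith
  have hre : z.re = ‖z‖ * Real.cos z.arg := by
    rw [Complex.cos_arg hz, mul_div_cancel₀ _ (norm_ne_zero_iff.mpr hz)]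
  have habs : ‖z‖ ^ 2 = z.re ^ 2 + z.im ^ 2 := by
    rw [Complex.sq_norm, Complex.normSq_apply]; ring
  have hsqre : (z ^ 2).re = z.re ^ 2 - z.im ^ 2 := by
    simp [sq, Complex.mul_re]
  have hre2 : Real.cos η ^ 2 * ‖z‖ ^ 2 ≤ z.re ^ 2 := by
    rw [hre, mul_pow]
    have h0 : (0:ℝ) ≤ ‖z‖ ^ 2 := by positivity
    nlinarith
  rw [Real.cos_two_mul, hsqre]
  nlinarith [norm_nonneg z]

lemma aux_quad {d L T X : ℝ} (hd0 : 0 ≤ d) (hd1 : d ≤ 1) (hX : -(d*(L*T)) ≤ X) :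
    (1-d)/2 * (L+T)^2 ≤ L^2 + T^2 + 2*X := by
  nlinarith [sq_nonneg (L-T)]

lemma aux_e1 (a t : ℝ) : (a+t)^2 ≤ 2*(a^2+t^2) := by nlinarith [sq_nonneg (a-t)]

lemma aux_e2 {q L t2 T : ℝ} (hq0 : 0 ≤ q) (hq1 : q ≤ 1) (hL : 0 ≤ L) (hT : q * t2 ≤ T) :
    q*(L+t2) ≤ L+T := by nlinarith

/-- Lemma (b): `c(|λ|^{1/2} + Ã) ≤ Re B ≤ |B| ≤ |λ|^{1/2} + Ã`. -/
theorem B_bounds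
    (N : ℕ) (hN : 2 ≤ N) (ε η : ℝ) (hε : 0 < ε) (hε' : ε < Real.pi / 2)
    (hη : 0 < η) (hη' : η < min (Real.pi / 4) (ε / 2)) :
    ∃ c : ℝ, 0 < c ∧ ∀ (lam : ℂ), lam ∈ SSector ε →
      ∀ ξ : Fin (N - 1) → ℂ, (∀ j, ξ j ∈ DSector η) →
        c * (Real.sqrt (‖lam‖) + tA ξ) ≤ (BB lam ξ).re ∧
        (BB lam ξ).re ≤ ‖BB lam ξ‖ ∧
        ‖BB lam ξ‖ ≤ Real.sqrt (‖lam‖) + tA ξ := by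
  have hπ := Real.pi_pos
  have hη4 : η < Real.pi / 4 := lt_of_lt_of_le hη' (min_le_left _ _)
  have hηε : η < ε / 2 := lt_of_lt_of_le hη' (min_le_right _ _)
  set δ : ℝ := ε - 2*η with hδdef
  have hδ : 0 < δ := by simp only [hδdef]; linarith
  have hδπ : δ < Real.pi := by simp only [hδdef]; linarith
  have hcos2η : 0 < Real.cos (2*η) := by
    apply Real.cos_pos_of_mem_Ioo; constructor <;> [linarith; linarith]
  have hcos2η1 : Real.cos (2*η) ≤ 1 := Real.cos_le_one _
  have hcosε : 0 < Real.cos ε := by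
    apply Real.cos_pos_of_mem_Ioo; constructor <;> [linarith; linarith]
  have hcosε1 : Real.cos ε < 1 := by
    have h := Real.strictAntiOn_cos (Set.mem_Icc.2 ⟨le_refl 0, hπ.le⟩)
      (Set.mem_Icc.2 ⟨hε.le, by linarith⟩) hε
    simpa using h
  have hcosδ1 : Real.cos δ < 1 := by
    have h := Real.strictAntiOn_cos (Set.mem_Icc.2 ⟨le_refl 0, hπ.le⟩)
      (Set.mem_Icc.2 ⟨hδ.le, hδπ.le⟩) hδ
    simpa using h
  have hcosδ0 : 0 < Real.cos δ := by
    apply Real.cos_pos_of_mem_Ioo; constructor <;> [linarith; linarith]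
  have hcos2ηε : Real.cos ε ≤ Real.cos (2*η) :=
    Real.cos_le_cos_of_nonneg_of_le_pi (by linarith) (by linarith) (by linarith)
  set k : ℝ := Real.sqrt ((1 - Real.cos δ)/2) with hkdef
  have hk0 : 0 < k := Real.sqrt_pos.2 (by linarith)
  have hksq : k ^ 2 = (1 - Real.cos δ)/2 := Real.sq_sqrt (by linarith)
  have hk1 : k ≤ 1 := Real.sqrt_le_one.2 (by linarith)
  set c : ℝ := Real.sqrt ((1 - Real.cos ε)/2 * (k * (Real.cos (2*η)/2))) with hcdef
  have hin : 0 < (1 - Real.cos ε)/2 * (k * (Real.cos (2*η)/2)) := by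
    apply mul_pos (by linarith) (mul_pos hk0 (by linarith))
  have hc0 : 0 < c := Real.sqrt_pos.2 hin
  have hcsq : c ^ 2 = (1 - Real.cos ε)/2 * (k * (Real.cos (2*η)/2)) :=
    Real.sq_sqrt hin.le
  refine ⟨c, hc0, fun lam hlam ξ hξ => ?_⟩
  obtain ⟨hlam0, hlamarg⟩ := hlam
  set S : ℂ := ∑ j, ξ j ^ 2 with hSdef
  have htA0 : 0 ≤ tA ξ := Real.sqrt_nonneg _
  have htAsq : tA ξ ^ 2 = ∑ j, ‖ξ j‖ ^ 2 :=
    Real.sq_sqrt (Finset.sum_nonneg fun j _ => by positivity)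
  have hSre : Real.cos (2*η) * tA ξ ^ 2 ≤ S.re := by
    rw [htAsq, hSdef, Complex.re_sum, Finset.mul_sum]
    apply Finset.sum_le_sum
    intro j _
    exact dsector_sq_re hη hη4 (hξ j).1 (hξ j).2
  have hne : Nonempty (Fin (N-1)) := by
    apply Fin.pos_iff_nonempty.1; omega
  obtain ⟨j0⟩ := hne
  have htApos : 0 < tA ξ ^ 2 := by
    rw [htAsq]
    exact Finset.sum_pos' (fun j _ => by positivity)
      ⟨j0, Finset.mem_univ j0, pow_pos (norm_pos_iff.mpr (hξ j0).1) 2⟩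
  have hSrepos : 0 < S.re := lt_of_lt_of_le (mul_pos hcos2η htApos) hSre
  have hS0 : S ≠ 0 := fun h => by simp [h] at hSrepos
  have hSabs_le : ‖S‖ ≤ tA ξ ^ 2 := by
    rw [htAsq, hSdef]
    refine le_trans (norm_sum_le _ _) (le_of_eq ?_)
    exact Finset.sum_congr rfl fun j _ => by rw [norm_pow]
  have hSre_le : S.re ≤ ‖S‖ := Complex.re_le_norm S
  have hSabs_ge : Real.cos (2*η) * tA ξ ^ 2 ≤ ‖S‖ := le_trans hSre hSre_le
  have hSabs0 : 0 < ‖S‖ := lt_of_lt_of_le hSrepos hSre_le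
  have hargS : |S.arg| ≤ 2*η := by
    by_contra h
    push_neg at h
    have h1 : Real.cos |S.arg| < Real.cos (2*η) :=
      Real.strictAntiOn_cos (Set.mem_Icc.2 ⟨by linarith, by linarith⟩)
        (Set.mem_Icc.2 ⟨abs_nonneg _, Complex.abs_arg_le_pi S⟩) h
    rw [Real.cos_abs, Complex.cos_arg hS0] at h1
    have h2 : Real.cos (2*η) * ‖S‖ ≤ S.re := by
      calc Real.cos (2*η) * ‖S‖ ≤ Real.cos (2*η) * tA ξ ^ 2 :=
            mul_le_mul_of_nonneg_left hSabs_le hcos2η.le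
        _ ≤ S.re := hSre
    rw [div_lt_iff₀ hSabs0] at h1
    linarith
  have hL0 : 0 ≤ ‖lam‖ := norm_nonneg _
  have hlre : lam.re = ‖lam‖ * Real.cos lam.arg := by
    rw [Complex.cos_arg hlam0, mul_div_cancel₀ _ (norm_ne_zero_iff.mpr hlam0)]
  have hcross : -(Real.cos δ * (‖lam‖ * ‖S‖)) ≤
      lam.re * S.re + lam.im * S.im := by
    have hlim : lam.im = ‖lam‖ * Real.sin lam.arg := by
      rw [Complex.sin_arg, mul_div_cancel₀ _ (norm_ne_zero_iff.mpr hlam0)]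
    have hsre : S.re = ‖S‖ * Real.cos S.arg := by
      rw [Complex.cos_arg hS0, mul_div_cancel₀ _ (norm_ne_zero_iff.mpr hS0)]
    have hsim : S.im = ‖S‖ * Real.sin S.arg := by
      rw [Complex.sin_arg, mul_div_cancel₀ _ (norm_ne_zero_iff.mpr hS0)]
    have hdiff : |lam.arg - S.arg| ≤ Real.pi - δ := by
      have h2 : |lam.arg - S.arg| ≤ |lam.arg| + |S.arg| := abs_sub _ _
      simp only [hδdef]
      linarith
    have hcosd : -Real.cos δ ≤ Real.cos (lam.arg - S.arg) := by
      rw [← Real.cos_pi_sub, ← Real.cos_abs (lam.arg - S.arg)]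
      exact Real.cos_le_cos_of_nonneg_of_le_pi (abs_nonneg _) (by linarith) hdiff
    have hexp : lam.re * S.re + lam.im * S.im =
        ‖lam‖ * ‖S‖ * Real.cos (lam.arg - S.arg) := by
      rw [hlre, hlim, hsre, hsim, Real.cos_sub]; ring
    have h0 : (0:ℝ) ≤ ‖lam‖ * ‖S‖ := by positivity
    calc -(Real.cos δ * (‖lam‖ * ‖S‖))
        = (-Real.cos δ) * (‖lam‖ * ‖S‖) := by ring
      _ ≤ Real.cos (lam.arg - S.arg) * (‖lam‖ * ‖S‖) :=
          mul_le_mul_of_nonneg_right hcosd h0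
      _ = lam.re * S.re + lam.im * S.im := by rw [hexp]; ring
  set w : ℂ := lam + S with hwdef
  have hwabs_sq : ‖w‖ ^ 2 =
      ‖lam‖ ^ 2 + ‖S‖ ^ 2 + 2*(lam.re * S.re + lam.im * S.im) := by
    rw [Complex.sq_norm, Complex.sq_norm, Complex.sq_norm]
    simp only [hwdef, Complex.normSq_apply, Complex.add_re, Complex.add_im]
    ring
  have hwabs_ge : k * (‖lam‖ + ‖S‖) ≤ ‖w‖ := by
    have h1 : (k * (‖lam‖ + ‖S‖)) ^ 2 ≤ ‖w‖ ^ 2 := by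
      rw [hwabs_sq, mul_pow, hksq]
      exact aux_quad hcosδ0.le (by linarith) hcross
    have h2 : (0:ℝ) ≤ k * (‖lam‖ + ‖S‖) := by positivity
    exact (pow_le_pow_iff_left₀ h2 (norm_nonneg _) two_ne_zero).1 h1
  have hwabs0 : 0 < ‖w‖ := by
    have hLpos : 0 < ‖lam‖ := norm_pos_iff.mpr hlam0
    calc (0:ℝ) < k * (‖lam‖ + ‖S‖) := by positivity
      _ ≤ ‖w‖ := hwabs_ge
  have hw0 : w ≠ 0 := fun h => by simp [h] at hwabs0
  have hlamre : -(Real.cos ε * ‖lam‖) ≤ lam.re := by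
    have hc : -Real.cos ε ≤ Real.cos lam.arg := by
      rw [← Real.cos_pi_sub, ← Real.cos_abs lam.arg]
      exact Real.cos_le_cos_of_nonneg_of_le_pi (abs_nonneg _) (by linarith) hlamarg.le
    calc -(Real.cos ε * ‖lam‖) = (-Real.cos ε) * ‖lam‖ := by ring
      _ ≤ Real.cos lam.arg * ‖lam‖ := mul_le_mul_of_nonneg_right hc hL0
      _ = lam.re := by rw [hlre]; ring
  have hS2 : Real.cos ε * ‖S‖ ≤ S.re := by
    calc Real.cos ε * ‖S‖ ≤ Real.cos (2*η) * ‖S‖ :=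
          mul_le_mul_of_nonneg_right hcos2ηε (norm_nonneg _)
      _ ≤ Real.cos (2*η) * tA ξ ^ 2 := mul_le_mul_of_nonneg_left hSabs_le hcos2η.le
      _ ≤ S.re := hSre
  have hwre : -(Real.cos ε * ‖w‖) ≤ w.re := by
    have htri : ‖lam‖ - ‖S‖ ≤ ‖w‖ := by
      have hws : w - S = lam := by rw [hwdef]; ring
      have h := norm_sub_le w S
      rw [hws] at h
      linarith
    have h3 : Real.cos ε * (‖lam‖ - ‖S‖) ≤
        Real.cos ε * ‖w‖ := mul_le_mul_of_nonneg_left htri hcosε.le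
    have hwre_eq : w.re = lam.re + S.re := by simp [hwdef]
    have h4 : Real.cos ε * (‖lam‖ - ‖S‖) =
        Real.cos ε * ‖lam‖ - Real.cos ε * ‖S‖ := by ring
    rw [h4] at h3
    rw [hwre_eq]
    linarith
  have hAAsq : AA ξ ^ 2 = S := by
    have hA : AA ξ = S ^ ((1:ℂ)/2) := by rw [hSdef]; rfl
    rw [hA]; exact cpow_half_sq hS0
  have hBB : BB lam ξ = w ^ ((1:ℂ)/2) := by rw [BB, hAAsq, hwdef]
  have hBBre : (BB lam ξ).re = Real.sqrt ((‖w‖ + w.re)/2) := by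
    rw [hBB]; exact cpow_half_re hw0
  have hBBabs : ‖BB lam ξ‖ = Real.sqrt (‖w‖) := by
    rw [hBB]; exact cpow_half_abs hw0
  refine ⟨?_, Complex.re_le_norm _, ?_⟩
  · -- main lower bound
    rw [hBBre]
    have hL : Real.sqrt (‖lam‖) ^ 2 = ‖lam‖ := Real.sq_sqrt hL0
    have e1 : (Real.sqrt (‖lam‖) + tA ξ) ^ 2 ≤ 2*(‖lam‖ + tA ξ ^ 2) := by
      have := aux_e1 (Real.sqrt (‖lam‖)) (tA ξ)
      rwa [hL] at this
    have e2 : Real.cos (2*η) * (‖lam‖ + tA ξ ^ 2) ≤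
        ‖lam‖ + ‖S‖ := aux_e2 hcos2η.le hcos2η1 hL0 hSabs_ge
    have e4 : (1 - Real.cos ε) * ‖w‖ ≤ ‖w‖ + w.re := by
      have h5 : (1 - Real.cos ε) * ‖w‖ =
          ‖w‖ - Real.cos ε * ‖w‖ := by ring
      rw [h5]
      linarith [hwre]
    have key : (c * (Real.sqrt (‖lam‖) + tA ξ)) ^ 2 ≤
        (‖w‖ + w.re)/2 := by
      rw [mul_pow, hcsq]
      calc (1 - Real.cos ε)/2 * (k * (Real.cos (2*η)/2)) *
            (Real.sqrt (‖lam‖) + tA ξ) ^ 2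
          ≤ (1 - Real.cos ε)/2 * (k * (Real.cos (2*η)/2)) *
            (2*(‖lam‖ + tA ξ ^ 2)) := by
            apply mul_le_mul_of_nonneg_left e1
            exact mul_nonneg (by linarith) (mul_nonneg hk0.le (by linarith))
        _ = (1 - Real.cos ε)/2 * k *
            (Real.cos (2*η) * (‖lam‖ + tA ξ ^ 2)) := by ring
        _ ≤ (1 - Real.cos ε)/2 * k * (‖lam‖ + ‖S‖) := by
            apply mul_le_mul_of_nonneg_left e2
            exact mul_nonneg (by linarith) hk0.le
        _ = (1 - Real.cos ε)/2 * (k * (‖lam‖ + ‖S‖)) := by ring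
        _ ≤ (1 - Real.cos ε)/2 * ‖w‖ := by
            apply mul_le_mul_of_nonneg_left hwabs_ge
            apply div_nonneg (by linarith) (by norm_num)
        _ ≤ (‖w‖ + w.re)/2 := by linarith [e4]
    calc c * (Real.sqrt (‖lam‖) + tA ξ)
        = Real.sqrt ((c * (Real.sqrt (‖lam‖) + tA ξ)) ^ 2) := by
          rw [Real.sqrt_sq (by positivity)]
      _ ≤ Real.sqrt ((‖w‖ + w.re)/2) := Real.sqrt_le_sqrt key
  · -- upper bound
    rw [hBBabs]
    have h1 : ‖w‖ ≤ ‖lam‖ + tA ξ ^ 2 := by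
      calc ‖w‖ ≤ ‖lam‖ + ‖S‖ := norm_add_le _ _
        _ ≤ ‖lam‖ + tA ξ ^ 2 := by linarith
    calc Real.sqrt (‖w‖) ≤ Real.sqrt (‖lam‖ + tA ξ ^ 2) :=
          Real.sqrt_le_sqrt h1
      _ ≤ Real.sqrt (‖lam‖) + Real.sqrt (tA ξ ^ 2) :=
          sqrt_add_le _ _ hL0 (by positivity)
      _ = Real.sqrt (‖lam‖) + tA ξ := by rw [Real.sqrt_sq htA0]

end
end

section
/- Let N ≥ 2, 0 < η < π/4 and m ∈ {0,1,2,3}. Then there exist constants c, C > 0, depending only on N, η (and m), such that for every ξ' = (ξ_1, …, ξ_{N−1}) with each ξ_j ∈ Σ̃_η and every x_N > 0, |A^m e^{−A x_N}| ≤ Ã^m e^{−c Ã x_N} ≤ C Ã^{m−1} x_N^{−1}, where A := (ξ_1² + ⋯ + ξ_{N−1}²)^{1/2} and Ã := (|ξ_1|² + ⋯ + |ξ_{N−1}|²)^{1/2}. -/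
open Complex

noncomputable section

/-- For `z` in the double sector, `Re(z²) ≥ cos(2η) |z|²`. -/
lemma sector_re_sq {η : ℝ} (hη : 0 < η) (hη2 : 2 * η < Real.pi / 2) {z : ℂ}
    (hz : z ∈ DSector η) : Real.cos (2 * η) * ‖z‖ ^ 2 ≤ (z ^ 2).re := by
  obtain ⟨hz0, hzarg⟩ := hz
  have habs : (0:ℝ) < ‖z‖ := norm_pos_iff.mpr hz0
  have hre : z.re = ‖z‖ * Real.cos (Complex.arg z) := by
    rw [Complex.cos_arg hz0]; field_simp
  have him : z.im = ‖z‖ * Real.sin (Complex.arg z) := by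
    rw [Complex.sin_arg]; field_simp
  have hresq : (z ^ 2).re = ‖z‖ ^ 2 * Real.cos (2 * Complex.arg z) := by
    rw [Real.cos_two_mul', sq, Complex.mul_re, hre, him]; ring
  rw [hresq]
  have hpi := Real.pi_pos
  have hargle := Complex.abs_arg_le_pi z
  have hcos : Real.cos (2 * η) ≤ Real.cos (2 * Complex.arg z) := by
    have hc2 : Real.cos (2 * Complex.arg z) = Real.cos (2 * |Complex.arg z|) := by
      rcases abs_cases (Complex.arg z) with ⟨h, _⟩ | ⟨h, _⟩
      · rw [h]
      · rw [h]; ring_nf; rw [Real.cos_neg]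
    rw [hc2]
    rcases hzarg with h | h
    · exact Real.cos_le_cos_of_nonneg_of_le_pi (by positivity) (by linarith)
        (by linarith)
    · have : Real.cos (2 * |Complex.arg z|) =
          Real.cos (2 * Real.pi - 2 * |Complex.arg z|) := by
        rw [Real.cos_sub, Real.cos_two_pi, Real.sin_two_pi]; ring
      rw [this]
      exact Real.cos_le_cos_of_nonneg_of_le_pi (by linarith) (by linarith) (by linarith)
  nlinarith [sq_nonneg (‖z‖)]

/-- Lemma (d): `|A^m e^{−A x_N}| ≤ Ã^m e^{−c Ã x_N} ≤ C Ã^{m−1} x_N^{−1}`. -/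
theorem A_exp_decay
    (N : ℕ) (hN : 2 ≤ N) (η : ℝ) (hη : 0 < η) (hη' : η < Real.pi / 4)
    (m : ℕ) (hm : m ≤ 3) :
    ∃ c C : ℝ, 0 < c ∧ 0 < C ∧
      ∀ ξ : Fin (N - 1) → ℂ, (∀ j, ξ j ∈ DSector η) → ∀ x : ℝ, 0 < x →
        ‖AA ξ ^ m * Complex.exp (-AA ξ * (x : ℂ))‖
          ≤ tA ξ ^ m * Real.exp (-c * tA ξ * x) ∧
        tA ξ ^ m * Real.exp (-c * tA ξ * x) ≤ C * tA ξ ^ ((m : ℝ) - 1) * x⁻¹ := by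
  have hpi := Real.pi_pos
  have hη2 : 2 * η < Real.pi / 2 := by linarith
  have hcos2 : 0 < Real.cos (2 * η) := Real.cos_pos_of_mem_Ioo ⟨by linarith, hη2⟩
  have hcosη : 0 < Real.cos η := Real.cos_pos_of_mem_Ioo ⟨by linarith, by linarith⟩
  set c : ℝ := Real.cos η * Real.sqrt (Real.cos (2 * η)) with hc
  have hcpos : 0 < c := by positivity
  refine ⟨c, 1 / c, hcpos, by positivity, ?_⟩
  intro ξ hξ x hx
  -- basic positivity of Ã
  have hnsum : (0:ℝ) < ∑ j, ‖ξ j‖ ^ 2 := by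
    have hne : Nonempty (Fin (N - 1)) := ⟨⟨0, by omega⟩⟩
    obtain ⟨j0⟩ := hne
    have h0 : (0:ℝ) < ‖ξ j0‖ ^ 2 :=
      pow_pos (norm_pos_iff.mpr (hξ j0).1) 2
    calc (0:ℝ) < ‖ξ j0‖ ^ 2 := h0
      _ ≤ ∑ j, ‖ξ j‖ ^ 2 :=
        Finset.single_le_sum (f := fun j => ‖ξ j‖ ^ 2)
          (fun j _ => by positivity) (Finset.mem_univ j0)
  have htApos : 0 < tA ξ := Real.sqrt_pos.mpr hnsum
  have htAsq : tA ξ ^ 2 = ∑ j, ‖ξ j‖ ^ 2 := Real.sq_sqrt hnsum.le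
  set w : ℂ := ∑ j, ξ j ^ 2 with hwdef
  -- Re w ≥ cos(2η) Ã²
  have hwre : Real.cos (2 * η) * tA ξ ^ 2 ≤ w.re := by
    rw [htAsq, hwdef, Complex.re_sum, Finset.mul_sum]
    exact Finset.sum_le_sum fun j _ => sector_re_sq hη hη2 (hξ j)
  have hwrepos : 0 < w.re := lt_of_lt_of_le (by positivity) hwre
  have hw0 : w ≠ 0 := fun h => by simp [h] at hwrepos
  have hwabspos : (0:ℝ) < ‖w‖ := norm_pos_iff.mpr hw0
  -- |w| ≤ Ã²
  have hwabs : ‖w‖ ≤ tA ξ ^ 2 := by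
    rw [htAsq, hwdef]
    refine le_trans (norm_sum_le _ _) (le_of_eq ?_)
    exact Finset.sum_congr rfl fun j _ => by rw [norm_pow]
  -- description of A = w^{1/2}
  have hAdef : AA ξ = Complex.exp (Complex.log w * ((1:ℂ)/2)) := by
    rw [AA, ← hwdef, Complex.cpow_def_of_ne_zero hw0]
  have hlogre : (Complex.log w * ((1:ℂ)/2)).re = Real.log (‖w‖) / 2 := by
    simp [Complex.mul_re, Complex.log_re]; ring
  have hlogim : (Complex.log w * ((1:ℂ)/2)).im = Complex.arg w / 2 := by
    simp [Complex.mul_im, Complex.log_im]; ring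
  have hexphalf : Real.exp (Real.log (‖w‖) / 2) = Real.sqrt (‖w‖) := by
    rw [Real.sqrt_eq_rpow, Real.rpow_def_of_pos hwabspos]; ring_nf
  have hAabs : ‖AA ξ‖ = Real.sqrt (‖w‖) := by
    rw [hAdef, Complex.norm_exp, hlogre, hexphalf]
  have hAre : (AA ξ).re = Real.sqrt (‖w‖) * Real.cos (Complex.arg w / 2) := by
    rw [hAdef, Complex.exp_re, hlogre, hlogim, hexphalf]
  -- |arg w| ≤ 2η
  have hargw : |Complex.arg w| ≤ 2 * η := by
    by_contra h
    push_neg at h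
    have h1 : Real.cos (Complex.arg w) = w.re / ‖w‖ := Complex.cos_arg hw0
    have h2 : Real.cos (2 * η) ≤ Real.cos (Complex.arg w) := by
      rw [h1, le_div_iff₀ hwabspos]
      calc Real.cos (2*η) * ‖w‖ ≤ Real.cos (2*η) * tA ξ ^ 2 :=
            mul_le_mul_of_nonneg_left hwabs hcos2.le
        _ ≤ w.re := hwre
    have h3 : Real.cos (Complex.arg w) = Real.cos |Complex.arg w| := by
      rcases abs_cases (Complex.arg w) with ⟨hh, _⟩ | ⟨hh, _⟩
      · rw [hh]
      · rw [hh, Real.cos_neg]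
    have h4 : Real.cos |Complex.arg w| < Real.cos (2 * η) :=
      Real.cos_lt_cos_of_nonneg_of_le_pi (by linarith) (Complex.abs_arg_le_pi w) h
    rw [h3] at h2; linarith
  -- cos(arg w / 2) ≥ cos η
  have hcoshalf : Real.cos η ≤ Real.cos (Complex.arg w / 2) := by
    have h3 : Real.cos (Complex.arg w / 2) = Real.cos (|Complex.arg w| / 2) := by
      rcases abs_cases (Complex.arg w) with ⟨hh, _⟩ | ⟨hh, _⟩
      · rw [hh]
      · rw [hh]; rw [show -Complex.arg w / 2 = -(Complex.arg w / 2) by ring, Real.cos_neg]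
    rw [h3]
    exact Real.cos_le_cos_of_nonneg_of_le_pi (by positivity) (by linarith)
      (by linarith [abs_nonneg (Complex.arg w)])
  -- |A| ≤ Ã
  have hAabsle : ‖AA ξ‖ ≤ tA ξ := by
    rw [hAabs]
    calc Real.sqrt (‖w‖) ≤ Real.sqrt (tA ξ ^ 2) := Real.sqrt_le_sqrt hwabs
      _ = tA ξ := Real.sqrt_sq htApos.le
  -- Re A ≥ c Ã
  have hArege : c * tA ξ ≤ (AA ξ).re := by
    rw [hAre]
    have hs1 : Real.sqrt (Real.cos (2*η)) * tA ξ ≤ Real.sqrt (‖w‖) := by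
      have : Real.sqrt (Real.cos (2*η)) * tA ξ
          = Real.sqrt (Real.cos (2*η) * tA ξ ^ 2) := by
        rw [Real.sqrt_mul hcos2.le, Real.sqrt_sq htApos.le]
      rw [this]
      exact Real.sqrt_le_sqrt (le_trans hwre (Complex.re_le_norm w))
    calc c * tA ξ = Real.cos η * (Real.sqrt (Real.cos (2*η)) * tA ξ) := by rw [hc]; ring
      _ ≤ Real.cos η * Real.sqrt (‖w‖) :=
          mul_le_mul_of_nonneg_left hs1 hcosη.le
      _ = Real.sqrt (‖w‖) * Real.cos η := by ring
      _ ≤ Real.sqrt (‖w‖) * Real.cos (Complex.arg w / 2) :=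
          mul_le_mul_of_nonneg_left hcoshalf (Real.sqrt_nonneg _)
  constructor
  · -- first inequality
    rw [norm_mul, norm_pow, Complex.norm_exp]
    have hre : (-AA ξ * (x:ℂ)).re = -(AA ξ).re * x := by
      simp [Complex.mul_re]
    rw [hre]
    have h1 : ‖AA ξ‖ ^ m ≤ tA ξ ^ m :=
      pow_le_pow_left₀ (norm_nonneg _) hAabsle m
    have h2 : Real.exp (-(AA ξ).re * x) ≤ Real.exp (-c * tA ξ * x) := by
      apply Real.exp_le_exp.mpr
      nlinarith
    exact mul_le_mul h1 h2 (Real.exp_pos _).le (by positivity)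
  · -- second inequality
    have key : Real.exp (-c * tA ξ * x) ≤ (c * tA ξ * x)⁻¹ := by
      rw [show -c * tA ξ * x = -(c * tA ξ * x) by ring, Real.exp_neg]
      apply inv_anti₀ (by positivity)
      calc c * tA ξ * x ≤ Real.exp (c * tA ξ * x) := by
            linarith [Real.add_one_le_exp (c * tA ξ * x)]
        _ = Real.exp (c * tA ξ * x) := rfl
    have hrpow : tA ξ ^ ((m:ℝ) - 1) = tA ξ ^ m / tA ξ := by
      rw [Real.rpow_sub htApos, Real.rpow_natCast, Real.rpow_one]
    calc tA ξ ^ m * Real.exp (-c * tA ξ * x) ≤ tA ξ ^ m * (c * tA ξ * x)⁻¹ :=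
          mul_le_mul_of_nonneg_left key (by positivity)
      _ = 1 / c * (tA ξ ^ m / tA ξ) * x⁻¹ := by field_simp
      _ = 1 / c * tA ξ ^ ((m:ℝ) - 1) * x⁻¹ := by rw [hrpow]

end
end

section
/- Let N ≥ 2, 0 < ε < π/2 and 0 < η < min{π/4, ε/2}. Then there exists a constant C > 0, depending only on N, ε, η, such that for all λ ∈ Σ_ε, all ξ' = (ξ_1, …, ξ_{N−1}) with each ξ_j ∈ Σ̃_η, all x_N > 0 and all ℓ ∈ {1, …, N−1}, the function S(x_N) := ((A + B)/B) e^{−A x_N} satisfies |ξ_ℓ| |S(x_N)| + |∂_{x_N} S(x_N)| ≤ C x_N^{−1}. -/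
open Complex

noncomputable section

private lemma sqrt_re_nonneg' (z : ℂ) : 0 ≤ (z ^ ((1:ℂ)/2)).re := by
  rcases eq_or_ne z 0 with rfl | hz
  · simp [Complex.zero_cpow (by norm_num : ((1:ℂ)/2) ≠ 0)]
  · rw [Complex.cpow_def_of_ne_zero hz, Complex.exp_re]
    apply mul_nonneg (Real.exp_nonneg _)
    have him : (Complex.log z * ((1:ℂ)/2)).im = z.arg / 2 := by
      simp [Complex.mul_im, Complex.log_im]
      ring
    rw [him]
    have h1 := Complex.neg_pi_lt_arg z
    have h2 := Complex.arg_le_pi z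
    exact Real.cos_nonneg_of_mem_Icc ⟨by linarith, by linarith⟩

private lemma sq_sqrt'' {z : ℂ} (hz : z ≠ 0) : (z ^ ((1:ℂ)/2)) ^ 2 = z := by
  rw [sq, ← Complex.cpow_add _ _ hz]
  norm_num

private lemma abs_arg_le_of_cos' {z : ℂ} (hz : z ≠ 0) {θ : ℝ} (hθ : 0 ≤ θ)
    (h : Real.cos θ * ‖z‖ ≤ z.re) : |z.arg| ≤ θ := by
  by_contra hlt
  push_neg at hlt
  have h1 : Real.cos |z.arg| < Real.cos θ :=
    Real.cos_lt_cos_of_nonneg_of_le_pi hθ (Complex.abs_arg_le_pi z) hlt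
  rw [Real.cos_abs, Complex.cos_arg hz] at h1
  have habs : 0 < ‖z‖ := norm_pos_iff.mpr hz
  have := (div_lt_iff₀ habs).mp h1
  linarith

private lemma re_sq_ge' {η : ℝ} (hη : 0 < η) (hη4 : η < Real.pi/4) {ξ : ℂ}
    (hξ : ξ ≠ 0 ∧ (|ξ.arg| < η ∨ Real.pi - η < |ξ.arg|)) :
    Real.cos (2*η) * ‖ξ‖ ^ 2 ≤ (ξ^2).re := by
  obtain ⟨hz, hargs⟩ := hξ
  have hπ := Real.pi_pos
  have e1 := Complex.norm_mul_cos_arg ξ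
  have e2 := Complex.norm_mul_sin_arg ξ
  have hre2 : (ξ^2).re = (‖ξ‖)^2 * Real.cos (2 * ξ.arg) := by
    rw [sq, Complex.mul_re, ← e1, ← e2, Real.cos_two_mul']
    ring
  rw [hre2]
  have harg := Complex.abs_arg_le_pi ξ
  have habsc : Real.cos (2 * ξ.arg) = Real.cos (2 * |ξ.arg|) := by
    rw [show 2*|ξ.arg| = |2*ξ.arg| by rw [abs_mul]; norm_num, Real.cos_abs]
  have hcc : Real.cos (2*η) ≤ Real.cos (2 * ξ.arg) := by
    rw [habsc]
    rcases hargs with h | h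
    · exact Real.cos_le_cos_of_nonneg_of_le_pi (by positivity) (by linarith) (by linarith)
    · rw [show 2*|ξ.arg| = 2*Real.pi - (2*Real.pi - 2*|ξ.arg|) by ring, Real.cos_two_pi_sub]
      exact Real.cos_le_cos_of_nonneg_of_le_pi (by linarith) (by linarith) (by linarith)
  nlinarith [norm_nonneg ξ, sq_nonneg (‖ξ‖)]

set_option maxHeartbeats 1000000 in
/-- Bound for the symbol `S = A B^{−2} χ^D_N = ((A+B)/B) e^{−A x_N}`. -/
theorem dirichlet_pressure_extra_symbol_bound
    (N : ℕ) (hN : 2 ≤ N) (ε η : ℝ) (hε : 0 < ε) (hε' : ε < Real.pi / 2)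
    (hη : 0 < η) (hη' : η < min (Real.pi / 4) (ε / 2)) :
    ∃ C : ℝ, 0 < C ∧ ∀ (lam : ℂ), lam ∈ SSector ε →
      ∀ ξ : Fin (N - 1) → ℂ, (∀ i, ξ i ∈ DSector η) →
      ∀ x : ℝ, 0 < x → ∀ l : Fin (N - 1),
        ‖ξ l‖
            * ‖(AA ξ + BB lam ξ) / BB lam ξ * Complex.exp (-AA ξ * (x : ℂ))‖
          + ‖deriv
              (fun y : ℝ => (AA ξ + BB lam ξ) / BB lam ξ * Complex.exp (-AA ξ * (y : ℂ))) x‖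
        ≤ C * x⁻¹ := by
  obtain ⟨hη4, hηε⟩ := lt_min_iff.mp hη'
  have hπ := Real.pi_pos
  set c : ℝ := Real.cos (2*η) with hcdef
  have hc0 : 0 < c := Real.cos_pos_of_mem_Ioo ⟨by linarith, by linarith⟩
  have hc1 : c ≤ 1 := Real.cos_le_one _
  set δ : ℝ := ε - 2*η with hδdef
  have hδ0 : 0 < δ := by linarith
  have hδπ : δ ≤ Real.pi := by linarith
  set k : ℝ := Real.sin δ ^ 2 with hkdef
  have hk0 : 0 < k := by
    have : 0 < Real.sin δ := Real.sin_pos_of_pos_of_lt_pi hδ0 (by linarith)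
    positivity
  set kq : ℝ := Real.sqrt (Real.sqrt k) with hkqdef
  have hkq0 : 0 < kq := Real.sqrt_pos.mpr (Real.sqrt_pos.mpr hk0)
  set c₁ : ℝ := Real.sqrt ((1+c)/2) with hc₁def
  have hc₁0 : 0 < c₁ := Real.sqrt_pos.mpr (by linarith)
  have hsc0 : 0 < Real.sqrt c := Real.sqrt_pos.mpr hc0
  refine ⟨(1/Real.sqrt c + 1) * (1 + 1/kq) * (1/c₁), by positivity, ?_⟩
  intro lam hlam ξ hξ x hx l
  set S : ℂ := ∑ j, ξ j ^ 2 with hSdef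
  have hAA : AA ξ = S ^ ((1:ℂ)/2) := rfl
  -- sum bounds
  have hsum_lb : ‖ξ l‖ ^ 2 ≤ ∑ j, ‖ξ j‖ ^ 2 :=
    Finset.single_le_sum (f := fun j => ‖ξ j‖ ^ 2) (fun i _ => by positivity) (Finset.mem_univ l)
  have hξl0 : ξ l ≠ 0 := (hξ l).1
  have habsξl : 0 < ‖ξ l‖ := norm_pos_iff.mpr hξl0
  have hsum0 : 0 < ∑ j, ‖ξ j‖ ^ 2 := lt_of_lt_of_le (by positivity) hsum_lb
  have hreS : c * (∑ j, ‖ξ j‖ ^ 2) ≤ S.re := by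
    rw [hSdef, Complex.re_sum, Finset.mul_sum]
    exact Finset.sum_le_sum (fun i _ => re_sq_ge' hη hη4 (hξ i))
  have habsS_ub : ‖S‖ ≤ ∑ j, ‖ξ j‖ ^ 2 := by
    refine le_trans (norm_sum_le _ _) (le_of_eq ?_)
    exact Finset.sum_congr rfl (fun i _ => norm_pow _ _)
  have hSre0 : 0 < S.re := lt_of_lt_of_le (mul_pos hc0 hsum0) hreS
  have hS0 : S ≠ 0 := by
    intro h; rw [h] at hSre0; simp at hSre0
  have hA2 : AA ξ ^ 2 = S := sq_sqrt'' hS0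
  set a : ℝ := ‖AA ξ‖ with hadef
  have habsA2 : a ^ 2 = ‖S‖ := by rw [hadef, ← norm_pow, hA2]
  have hA0 : AA ξ ≠ 0 := by
    intro h
    rw [h] at hA2; simp at hA2; exact hS0 hA2.symm
  have ha0 : 0 < a := norm_pos_iff.mpr hA0
  have hreA_nonneg : 0 ≤ (AA ξ).re := sqrt_re_nonneg' S
  -- Re A ≥ c₁ a
  have hreA : c₁ * a ≤ (AA ξ).re := by
    have h1 : (AA ξ ^ 2).re = (AA ξ).re^2 - (AA ξ).im^2 := by
      rw [sq, Complex.mul_re]; ring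
    have h2 : (AA ξ).re^2 + (AA ξ).im^2 = a^2 := by
      rw [hadef, Complex.sq_norm, Complex.normSq_apply]; ring
    have hSre_ge : c * a^2 ≤ S.re := by
      rw [habsA2]
      calc c * ‖S‖ ≤ c * (∑ j, ‖ξ j‖ ^ 2) := by
            exact mul_le_mul_of_nonneg_left habsS_ub hc0.le
        _ ≤ S.re := hreS
    have hsq : ((1+c)/2) * a^2 ≤ (AA ξ).re^2 := by
      have hSre_le : S.re ≤ a^2 := by rw [habsA2]; exact Complex.re_le_norm S
      have := hA2 ▸ h1
      nlinarith
    calc c₁ * a = Real.sqrt (((1+c)/2) * a^2) := by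
          rw [Real.sqrt_mul (by linarith), Real.sqrt_sq ha0.le, hc₁def]
      _ ≤ Real.sqrt ((AA ξ).re^2) := Real.sqrt_le_sqrt hsq
      _ = (AA ξ).re := Real.sqrt_sq hreA_nonneg
  -- |ξ l| ≤ a / sqrt c
  have hξl_le : ‖ξ l‖ ≤ a / Real.sqrt c := by
    have h1 : c * ‖ξ l‖^2 ≤ a^2 := by
      rw [habsA2]
      calc c * ‖ξ l‖^2 ≤ c * (∑ j, ‖ξ j‖ ^ 2) :=
            mul_le_mul_of_nonneg_left hsum_lb hc0.le
        _ ≤ S.re := hreS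
        _ ≤ ‖S‖ := Complex.re_le_norm S
    have h2 : (Real.sqrt c * ‖ξ l‖)^2 ≤ a^2 := by
      rw [mul_pow, Real.sq_sqrt hc0.le]; exact h1
    have h3 : Real.sqrt c * ‖ξ l‖ ≤ a := by
      have := Real.sqrt_le_sqrt h2
      rwa [Real.sqrt_sq (by positivity), Real.sqrt_sq ha0.le] at this
    rw [le_div_iff₀ hsc0]; linarith [mul_comm (Real.sqrt c) (‖ξ l‖)]
  -- arg S bound
  have hargS : |S.arg| ≤ 2*η := by
    apply abs_arg_le_of_cos' hS0 (by linarith)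
    calc Real.cos (2*η) * ‖S‖ ≤ c * (∑ j, ‖ξ j‖ ^ 2) :=
          mul_le_mul_of_nonneg_left habsS_ub hc0.le
      _ ≤ S.re := hreS
  -- lower bound for |lam + S|
  obtain ⟨hlam0, hlamarg⟩ := hlam
  have hT_lb : Real.sqrt k * a^2 ≤ ‖lam + S‖ := by
    have hcos : -(Real.cos δ) ≤ Real.cos (lam.arg - S.arg) := by
      rw [← Real.cos_pi_sub, ← Real.cos_abs (lam.arg - S.arg)]
      apply Real.cos_le_cos_of_nonneg_of_le_pi (abs_nonneg _) (by linarith)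
      calc |lam.arg - S.arg| ≤ |lam.arg| + |S.arg| := abs_sub _ _
        _ ≤ Real.pi - δ := by linarith
    have hre_mul : -(Real.cos δ) * (‖lam‖ * ‖S‖)
        ≤ (lam * (starRingEnd ℂ) S).re := by
      have heq : (lam * (starRingEnd ℂ) S).re
          = ‖lam‖ * ‖S‖ * Real.cos (lam.arg - S.arg) := by
        rw [Complex.mul_re, Complex.conj_re, Complex.conj_im, Real.cos_sub,
          ← Complex.norm_mul_cos_arg lam, ← Complex.norm_mul_sin_arg lam,
          ← Complex.norm_mul_cos_arg S, ← Complex.norm_mul_sin_arg S]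
        ring
      rw [heq]
      have hnn : 0 ≤ ‖lam‖ * ‖S‖ := by positivity
      calc -(Real.cos δ) * (‖lam‖ * ‖S‖)
          = (‖lam‖ * ‖S‖) * (-(Real.cos δ)) := by ring
        _ ≤ (‖lam‖ * ‖S‖) * Real.cos (lam.arg - S.arg) :=
            mul_le_mul_of_nonneg_left hcos hnn
        _ = ‖lam‖ * ‖S‖ * Real.cos (lam.arg - S.arg) := by ring
    have hnormSq : ‖lam + S‖^2 = ‖lam‖^2 + ‖S‖^2
        + 2 * (lam * (starRingEnd ℂ) S).re := by
      rw [Complex.sq_norm, Complex.sq_norm, Complex.sq_norm, Complex.normSq_add]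
    have hsq_lb : k * (‖S‖)^2 ≤ ‖lam + S‖^2 := by
      rw [hnormSq, hkdef]
      nlinarith [sq_nonneg (‖lam‖ - Real.cos δ * ‖S‖),
        Real.sin_sq_add_cos_sq δ, hre_mul]
    calc Real.sqrt k * a^2 = Real.sqrt (k * (‖S‖)^2) := by
          rw [Real.sqrt_mul hk0.le, Real.sqrt_sq (norm_nonneg S), habsA2]
      _ ≤ Real.sqrt (‖lam + S‖^2) := Real.sqrt_le_sqrt hsq_lb
      _ = ‖lam + S‖ := Real.sqrt_sq (norm_nonneg _)
  set b : ℝ := ‖BB lam ξ‖ with hbdef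
  have hT0 : lam + S ≠ 0 := by
    intro h
    rw [h] at hT_lb; simp at hT_lb
    have h5 : 0 < Real.sqrt k * a^2 := mul_pos (Real.sqrt_pos.mpr hk0) (by positivity)
    linarith
  have hBB : BB lam ξ = (lam + S) ^ ((1:ℂ)/2) := by rw [BB, hA2]
  have hb2 : b^2 = ‖lam + S‖ := by
    rw [hbdef, ← norm_pow, hBB, sq_sqrt'' hT0]
  have hB0 : BB lam ξ ≠ 0 := by
    rw [hBB]
    intro h
    have := sq_sqrt'' hT0
    rw [h] at this; simp at this; exact hT0 this.symm
  have hb0 : 0 < b := norm_pos_iff.mpr hB0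
  -- b ≥ kq * a
  have hb_lb : kq * a ≤ b := by
    have h1 : (kq * a)^2 ≤ b^2 := by
      rw [hb2, mul_pow, hkqdef, Real.sq_sqrt (Real.sqrt_nonneg k)]
      exact hT_lb
    have := Real.sqrt_le_sqrt h1
    rwa [Real.sqrt_sq (by positivity), Real.sqrt_sq hb0.le] at this
  -- quotient bound
  set qa : ℝ := ‖(AA ξ + BB lam ξ) / BB lam ξ‖ with hqadef
  have hqa_ub : qa ≤ 1 + 1/kq := by
    rw [hqadef, norm_div]
    have h1 : ‖AA ξ + BB lam ξ‖ ≤ a + b := norm_add_le _ _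
    calc ‖AA ξ + BB lam ξ‖ / ‖BB lam ξ‖ ≤ (a + b) / b := by
          rw [← hbdef]; gcongr
      _ = a/b + 1 := by field_simp
      _ ≤ 1/kq + 1 := by
          have : a/b ≤ 1/kq := by
            rw [div_le_div_iff₀ hb0 hkq0]
            linarith [mul_comm kq a]
          linarith
      _ = 1 + 1/kq := by ring
  -- derivative
  have hd : HasDerivAt (fun y : ℝ => (AA ξ + BB lam ξ) / BB lam ξ * Complex.exp (-AA ξ * (y:ℂ)))
      ((AA ξ + BB lam ξ) / BB lam ξ * (Complex.exp (-AA ξ * (x:ℂ)) * (-AA ξ))) x := by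
    have h1 : HasDerivAt (fun w : ℂ => Complex.exp (-AA ξ * w))
        (Complex.exp (-AA ξ * (x:ℂ)) * (-AA ξ)) (x:ℂ) := by
      simpa using ((hasDerivAt_id ((x:ℝ):ℂ)).const_mul (-AA ξ)).cexp
    exact h1.comp_ofReal.const_mul _
  rw [hd.deriv]
  -- abs computations
  have hexp_re : (-AA ξ * (x:ℂ)).re = -((AA ξ).re * x) := by
    simp [Complex.mul_re]
  set E : ℝ := Real.exp (-((AA ξ).re * x)) with hEdef
  have hE0 : 0 < E := Real.exp_pos _
  have habs_exp : ‖Complex.exp (-AA ξ * (x:ℂ))‖ = E := by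
    rw [Complex.norm_exp, hexp_re]
  have habs1 : ‖(AA ξ + BB lam ξ) / BB lam ξ * Complex.exp (-AA ξ * (x:ℂ))‖
      = qa * E := by
    rw [norm_mul, habs_exp, hqadef]
  have habs2 : ‖(AA ξ + BB lam ξ) / BB lam ξ
      * (Complex.exp (-AA ξ * (x:ℂ)) * (-AA ξ))‖ = qa * (E * a) := by
    rw [norm_mul, norm_mul, norm_neg, habs_exp, hqadef, hadef]
  rw [habs1, habs2]
  -- t e^{-t} ≤ 1
  have htE : (AA ξ).re * E ≤ x⁻¹ := by
    set t : ℝ := (AA ξ).re * x with htdef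
    have ht0 : 0 ≤ t := mul_nonneg hreA_nonneg hx.le
    have h1 : t * Real.exp (-t) ≤ 1 := by
      have h2 : t ≤ Real.exp t := by linarith [Real.add_one_le_exp t]
      have h3 : Real.exp t * Real.exp (-t) = 1 := by
        rw [← Real.exp_add]; simp
      calc t * Real.exp (-t) ≤ Real.exp t * Real.exp (-t) :=
            mul_le_mul_of_nonneg_right h2 (Real.exp_pos _).le
        _ = 1 := h3
    have hEt : E = Real.exp (-t) := by rw [hEdef, htdef]
    have h4 : (AA ξ).re * E = t * Real.exp (-t) / x := by
      rw [hEt, htdef]; field_simp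
    rw [h4]
    calc t * Real.exp (-t) / x ≤ 1 / x := by gcongr
      _ = x⁻¹ := one_div x
  -- final chain
  have haE : a * E ≤ (1/c₁) * x⁻¹ := by
    have h2 : c₁ * (a * E) ≤ x⁻¹ := by
      calc c₁ * (a * E) = (c₁ * a) * E := by ring
        _ ≤ (AA ξ).re * E := mul_le_mul_of_nonneg_right hreA hE0.le
        _ ≤ x⁻¹ := htE
    calc a * E = (c₁ * (a * E)) / c₁ := by field_simp
      _ ≤ x⁻¹ / c₁ := by gcongr
      _ = (1/c₁) * x⁻¹ := by ring
  calc ‖ξ l‖ * (qa * E) + qa * (E * a)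
      = (‖ξ l‖ + a) * (qa * E) := by ring
    _ ≤ ((1/Real.sqrt c + 1) * a) * ((1 + 1/kq) * E) := by
        apply mul_le_mul
        · calc ‖ξ l‖ + a ≤ a / Real.sqrt c + a := by linarith
            _ = (1/Real.sqrt c + 1) * a := by ring
        · exact mul_le_mul_of_nonneg_right hqa_ub hE0.le
        · positivity
        · positivity
    _ = ((1/Real.sqrt c + 1) * (1 + 1/kq)) * (a * E) := by ring
    _ ≤ ((1/Real.sqrt c + 1) * (1 + 1/kq)) * ((1/c₁) * x⁻¹) := by
        apply mul_le_mul_of_nonneg_left haE (by positivity)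
    _ = (1/Real.sqrt c + 1) * (1 + 1/kq) * (1/c₁) * x⁻¹ := by ring


end
end
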